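/- For all real numbers t < T, x, k and all λ in (max(e^x − e^k, 0), e^x), if Θ = BS^{−1}(t,T,x,k,λ) satisfies the zero-vanna condition d2(t,T,x,k,Θ) = 0 (equivalently x − k = Θ²(T−t)/2), then the third derivative of the inverse Black–Scholes map equals exactly (BS^{−1})‴(t,T,x,k,λ) = (2π)^{3/2} e^{−3x} e^{(3/2)Θ²(T−t)} (T−t)^{−1/2}. -/

import Mathlib

noncomputable section

open Real MeasureTheory Set Filter Function
open scoped Topology

/-- Standard normal density. -/
def phi (z : ℝ) : ℝ := (Real.sqrt (2 * Real.pi))⁻¹ * Real.exp (-z ^ 2 / 2)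

/-- Standard normal cumulative distribution function. -/
def N (y : ℝ) : ℝ := ∫ z in Set.Iic y, phi z

lemma phi_pos (z : ℝ) : 0 < phi z := by
  have h : 0 < 2 * Real.pi := by positivity
  exact mul_pos (inv_pos.2 (Real.sqrt_pos.2 h)) (Real.exp_pos _)

lemma phi_le (z : ℝ) : phi z ≤ (Real.sqrt (2 * Real.pi))⁻¹ := by
  have h : Real.exp (-z ^ 2 / 2) ≤ 1 := by
    rw [Real.exp_le_one_iff]
    nlinarith [sq_nonneg z]
  have hc : (0:ℝ) ≤ (Real.sqrt (2 * Real.pi))⁻¹ := by positivity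
  calc phi z ≤ (Real.sqrt (2 * Real.pi))⁻¹ * 1 := mul_le_mul_of_nonneg_left h hc
  _ = _ := mul_one _

lemma phi_cont : Continuous phi := by
  unfold phi; fun_prop

lemma integrable_phi : Integrable phi := by
  have h : Integrable (fun z : ℝ => Real.exp (-(1/2 : ℝ) * z ^ 2)) :=
    integrable_exp_neg_mul_sq (by norm_num)
  have h2 := h.const_mul (Real.sqrt (2 * Real.pi))⁻¹
  have : (fun z : ℝ => (Real.sqrt (2 * Real.pi))⁻¹ * Real.exp (-(1/2 : ℝ) * z ^ 2)) = phi := by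
    funext z; unfold phi; ring_nf
  rwa [this] at h2

lemma integral_phi : ∫ z, phi z = 1 := by
  have h := integral_gaussian (1/2)
  have h2 : ∫ z : ℝ, Real.exp (-(1/2 : ℝ) * z ^ 2) = Real.sqrt (2 * Real.pi) := by
    rw [h]; norm_num [mul_comm]
  have h3 : ∫ z, phi z = (Real.sqrt (2 * Real.pi))⁻¹ * Real.sqrt (2 * Real.pi) := by
    calc ∫ z, phi z = ∫ z : ℝ, (Real.sqrt (2 * Real.pi))⁻¹ * Real.exp (-(1/2 : ℝ) * z ^ 2) := by
          congr 1; funext z; unfold phi; ring_nf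
      _ = (Real.sqrt (2 * Real.pi))⁻¹ * ∫ z : ℝ, Real.exp (-(1/2 : ℝ) * z ^ 2) :=
          integral_const_mul _ _
      _ = _ := by rw [h2]
  rw [h3, inv_mul_cancel₀]
  positivity

lemma N_sub_N (a b : ℝ) : N b - N a = ∫ z in a..b, phi z := by
  unfold N
  exact intervalIntegral.integral_Iic_sub_Iic integrable_phi.integrableOn
    integrable_phi.integrableOn

lemma hasStrictDerivAt_N (y : ℝ) : HasStrictDerivAt N (phi y) y := by
  have h0 : HasStrictDerivAt (fun u => ∫ z in (0:ℝ)..u, phi z) (phi y) y :=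
    intervalIntegral.integral_hasStrictDerivAt_right
      integrable_phi.intervalIntegrable
      phi_cont.stronglyMeasurable.stronglyMeasurableAtFilter
      phi_cont.continuousAt
  have h : HasStrictDerivAt (fun u => (∫ z in (0:ℝ)..u, phi z) + N 0) (phi y) y :=
    h0.add_const (N 0)
  have hfun : (fun u => (∫ z in (0:ℝ)..u, phi z) + N 0) = N := by
    funext u; rw [← N_sub_N]; ring
  rwa [hfun] at h

lemma N_nonneg (y : ℝ) : 0 ≤ N y :=
  setIntegral_nonneg measurableSet_Iic (fun z _ => (phi_pos z).le)

lemma N_le_one (y : ℝ) : N y ≤ 1 := by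
  rw [← integral_phi]
  exact setIntegral_le_integral integrable_phi
    (Filter.Eventually.of_forall (fun z => (phi_pos z).le))

lemma N_sub_le {a b : ℝ} (hab : a ≤ b) :
    N b - N a ≤ (Real.sqrt (2 * Real.pi))⁻¹ * (b - a) := by
  rw [N_sub_N]
  have h : ∫ z in a..b, phi z ≤ ∫ _z in a..b, (Real.sqrt (2 * Real.pi))⁻¹ :=
    intervalIntegral.integral_mono_on hab integrable_phi.intervalIntegrable
      (intervalIntegrable_const) (fun u _ => phi_le u)
  have h2 : ∫ _z in a..b, (Real.sqrt (2 * Real.pi))⁻¹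
      = (Real.sqrt (2 * Real.pi))⁻¹ * (b - a) := by
    rw [intervalIntegral.integral_const, smul_eq_mul]; ring
  rw [h2] at h; exact h

lemma tendsto_N_atTop : Tendsto N atTop (𝓝 1) := by
  have h := MeasureTheory.intervalIntegral_tendsto_integral_Ioi 0
    integrable_phi.integrableOn tendsto_id
  simp only [id_eq] at h
  have h2 := h.add_const (N 0)
  have hfun : (fun u : ℝ => (∫ z in (0:ℝ)..u, phi z) + N 0) = N := by
    funext u; rw [← N_sub_N]; ring
  rw [hfun] at h2
  have hval : (∫ z in Ioi (0:ℝ), phi z) + N 0 = 1 := by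
    have := MeasureTheory.integral_add_compl (measurableSet_Iic (a := (0:ℝ))) integrable_phi
    rw [compl_Iic] at this
    rw [← integral_phi, ← this]; unfold N; ring
  rwa [hval] at h2

lemma tendsto_N_atBot : Tendsto N atBot (𝓝 0) := by
  have h := MeasureTheory.intervalIntegral_tendsto_integral_Iic 0
    integrable_phi.integrableOn tendsto_id
  simp only [id_eq] at h
  have h2 := (tendsto_const_nhds (x := N 0)).sub h
  have hfun : (fun u : ℝ => N 0 - ∫ z in u..(0:ℝ), phi z) = N := by
    funext u; rw [← N_sub_N]; ring
  rw [hfun] at h2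
  have hval : N 0 - ∫ z in Iic (0:ℝ), phi z = 0 := by unfold N; ring
  rwa [hval] at h2
/-- Black–Scholes auxiliary quantity `d₁`. -/
def d1 (t T x k σ : ℝ) : ℝ :=
  (x - k) / (σ * Real.sqrt (T - t)) + σ * Real.sqrt (T - t) / 2

/-- Black–Scholes auxiliary quantity `d₂`. -/
def d2 (t T x k σ : ℝ) : ℝ :=
  (x - k) / (σ * Real.sqrt (T - t)) - σ * Real.sqrt (T - t) / 2

/-- Black–Scholes call price with log-spot `x`, log-strike `k`,
time to maturity `T - t` and volatility `σ`. -/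
def BS (t T x k σ : ℝ) : ℝ :=
  Real.exp x * N (d1 t T x k σ) - Real.exp k * N (d2 t T x k σ)

/-- Inverse of the Black–Scholes price in the volatility argument on `(0, ∞)`. -/
def BSinv (t T x k l : ℝ) : ℝ := Function.invFunOn (BS t T x k) (Set.Ioi 0) l

def vega (t T x k σ : ℝ) : ℝ := Real.exp x * phi (d1 t T x k σ) * Real.sqrt (T - t)

def d1p (t T x k σ : ℝ) : ℝ :=
  Real.sqrt (T - t) / 2 - (x - k) / (σ ^ 2 * Real.sqrt (T - t))

def d1pp (t T x k σ : ℝ) : ℝ := 2 * (x - k) / (σ ^ 3 * Real.sqrt (T - t))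

def vega2 (t T x k σ : ℝ) : ℝ :=
  -(vega t T x k σ * (d1 t T x k σ * d1p t T x k σ))

def vega3 (t T x k σ : ℝ) : ℝ :=
  -(vega2 t T x k σ * (d1 t T x k σ * d1p t T x k σ)
    + vega t T x k σ * (d1p t T x k σ * d1p t T x k σ
        + d1 t T x k σ * d1pp t T x k σ))

variable {t T x k σ l : ℝ}

lemma hasStrictDerivAt_d1 (hτ : 0 < T - t) (hσ : σ ≠ 0) :
    HasStrictDerivAt (fun σ => d1 t T x k σ) (d1p t T x k σ) σ := by
  have hs : Real.sqrt (T - t) ≠ 0 := (Real.sqrt_pos.2 hτ).ne'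
  have h1 : HasStrictDerivAt (fun σ : ℝ => (x - k) / Real.sqrt (T - t) * σ⁻¹)
      ((x - k) / Real.sqrt (T - t) * (-(σ ^ 2)⁻¹)) σ :=
    (hasStrictDerivAt_inv hσ).const_mul _
  have h2 : HasStrictDerivAt (fun σ : ℝ => σ * (Real.sqrt (T - t) / 2))
      (Real.sqrt (T - t) / 2) σ := by
    simpa using (hasStrictDerivAt_id σ).mul_const (Real.sqrt (T - t) / 2)
  have h := h1.add h2
  have hfun : (fun σ : ℝ => (x - k) / Real.sqrt (T - t) * σ⁻¹ + σ * (Real.sqrt (T - t) / 2))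
      = fun σ => d1 t T x k σ := by
    funext u; unfold d1
    rw [mul_comm u (Real.sqrt (T - t)), ← div_div, div_eq_mul_inv ((x-k)/_), mul_div_assoc]
    ring
  change HasStrictDerivAt (fun σ : ℝ => (x - k) / Real.sqrt (T - t) * σ⁻¹ + σ * (Real.sqrt (T - t) / 2)) _ σ at h
  rw [hfun] at h
  convert h using 1
  unfold d1p; field_simp; ring

lemma hasStrictDerivAt_d2 (hτ : 0 < T - t) (hσ : σ ≠ 0) :
    HasStrictDerivAt (fun σ => d2 t T x k σ)
      (d1p t T x k σ - Real.sqrt (T - t)) σ := by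
  have h := (hasStrictDerivAt_d1 (x := x) (k := k) hτ hσ).sub
    ((hasStrictDerivAt_id σ).mul_const (Real.sqrt (T - t)))
  have hfun : (fun σ : ℝ => d1 t T x k σ - σ * Real.sqrt (T - t))
      = fun σ => d2 t T x k σ := by
    funext u; unfold d1 d2; ring
  change HasStrictDerivAt (fun σ : ℝ => d1 t T x k σ - σ * Real.sqrt (T - t)) _ σ at h
  simpa [hfun] using h

lemma exp_phi_eq (hτ : 0 < T - t) (hσ : σ ≠ 0) :
    Real.exp k * phi (d2 t T x k σ) = Real.exp x * phi (d1 t T x k σ) := by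
  have hs : Real.sqrt (T - t) ≠ 0 := (Real.sqrt_pos.2 hτ).ne'
  unfold phi
  have hsq : d1 t T x k σ ^ 2 - d2 t T x k σ ^ 2 = 2 * (x - k) := by
    unfold d1 d2; field_simp; ring
  have h1 : Real.exp k * ((Real.sqrt (2 * Real.pi))⁻¹ * Real.exp (-d2 t T x k σ ^ 2 / 2))
      = (Real.sqrt (2 * Real.pi))⁻¹ * Real.exp (k + -d2 t T x k σ ^ 2 / 2) := by
    rw [Real.exp_add]; ring
  have h2 : Real.exp x * ((Real.sqrt (2 * Real.pi))⁻¹ * Real.exp (-d1 t T x k σ ^ 2 / 2))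
      = (Real.sqrt (2 * Real.pi))⁻¹ * Real.exp (x + -d1 t T x k σ ^ 2 / 2) := by
    rw [Real.exp_add]; ring
  rw [h1, h2]
  congr 1
  rw [Real.exp_eq_exp]
  linarith

lemma hasStrictDerivAt_BS (hτ : 0 < T - t) (hσ : 0 < σ) :
    HasStrictDerivAt (fun σ => BS t T x k σ) (vega t T x k σ) σ := by
  have h1 := ((hasStrictDerivAt_N (d1 t T x k σ)).comp σ
    (hasStrictDerivAt_d1 hτ hσ.ne')).const_mul (Real.exp x)
  have h2 := ((hasStrictDerivAt_N (d2 t T x k σ)).comp σ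
    (hasStrictDerivAt_d2 hτ hσ.ne')).const_mul (Real.exp k)
  have h := h1.sub h2
  have hfun : (fun σ : ℝ => Real.exp x * (N ∘ fun σ => d1 t T x k σ) σ
      - Real.exp k * (N ∘ fun σ => d2 t T x k σ) σ) = fun σ => BS t T x k σ := by
    funext u; unfold BS; simp [Function.comp]
  change HasStrictDerivAt (fun σ : ℝ => Real.exp x * (N ∘ fun σ => d1 t T x k σ) σ
      - Real.exp k * (N ∘ fun σ => d2 t T x k σ) σ) _ σ at h
  rw [hfun] at h
  convert h using 1
  have hkey := exp_phi_eq (σ := σ) (t := t) (T := T) (x := x) (k := k) hτ hσ.ne'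
  unfold vega
  linear_combination (d1p t T x k σ - Real.sqrt (T - t)) * hkey
lemma vega_pos (hτ : 0 < T - t) : 0 < vega t T x k σ := by
  unfold vega
  have := phi_pos (d1 t T x k σ)
  have := Real.exp_pos x
  have := Real.sqrt_pos.2 hτ
  positivity

lemma strictMonoOn_BS (hτ : 0 < T - t) :
    StrictMonoOn (fun σ => BS t T x k σ) (Set.Ioi 0) := by
  refine strictMonoOn_of_deriv_pos (convex_Ioi 0) ?_ ?_
  · intro σ hσ
    exact ((hasStrictDerivAt_BS hτ hσ).hasDerivAt.continuousAt).continuousWithinAt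
  · intro σ hσ
    rw [interior_Ioi] at hσ
    rw [(hasStrictDerivAt_BS hτ hσ).hasDerivAt.deriv]
    exact vega_pos hτ

lemma BS_le (hτ : 0 < T - t) (hσ : 0 < σ) :
    BS t T x k σ ≤ max (Real.exp x - Real.exp k) 0
      + Real.exp k * ((Real.sqrt (2 * Real.pi))⁻¹ * (σ * Real.sqrt (T - t))) := by
  set s := Real.sqrt (T - t) with hs
  have hspos : 0 < s := Real.sqrt_pos.2 hτ
  have hd : d1 t T x k σ - d2 t T x k σ = σ * s := by unfold d1 d2; ring
  have hdle : d2 t T x k σ ≤ d1 t T x k σ := by nlinarith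
  have h1 : N (d1 t T x k σ) - N (d2 t T x k σ)
      ≤ (Real.sqrt (2 * Real.pi))⁻¹ * (σ * s) := by
    have := N_sub_le hdle
    rw [hd] at this; exact this
  have h2 : (Real.exp x - Real.exp k) * N (d1 t T x k σ)
      ≤ max (Real.exp x - Real.exp k) 0 := by
    rcases le_or_gt 0 (Real.exp x - Real.exp k) with h | h
    · calc (Real.exp x - Real.exp k) * N (d1 t T x k σ)
          ≤ (Real.exp x - Real.exp k) * 1 :=
            mul_le_mul_of_nonneg_left (N_le_one _) h
        _ = Real.exp x - Real.exp k := mul_one _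
        _ ≤ _ := le_max_left _ _
    · have : (Real.exp x - Real.exp k) * N (d1 t T x k σ) ≤ 0 :=
        mul_nonpos_of_nonpos_of_nonneg h.le (N_nonneg _)
      exact this.trans (le_max_right _ _)
  have hBS : BS t T x k σ = (Real.exp x - Real.exp k) * N (d1 t T x k σ)
      + Real.exp k * (N (d1 t T x k σ) - N (d2 t T x k σ)) := by
    unfold BS; ring
  rw [hBS]
  have h3 : Real.exp k * (N (d1 t T x k σ) - N (d2 t T x k σ))
      ≤ Real.exp k * ((Real.sqrt (2 * Real.pi))⁻¹ * (σ * s)) :=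
    mul_le_mul_of_nonneg_left h1 (Real.exp_pos k).le
  linarith

lemma tendsto_BS_atTop (hτ : 0 < T - t) :
    Filter.Tendsto (fun σ => BS t T x k σ) Filter.atTop (nhds (Real.exp x)) := by
  set s := Real.sqrt (T - t) with hs
  have hspos : 0 < s := Real.sqrt_pos.2 hτ
  have hq : Filter.Tendsto (fun σ : ℝ => (x - k) / s * σ⁻¹) Filter.atTop (nhds 0) := by
    simpa using tendsto_inv_atTop_zero.const_mul ((x - k) / s)
  have hlin : Filter.Tendsto (fun σ : ℝ => σ * (s / 2)) Filter.atTop Filter.atTop :=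
    Filter.Tendsto.atTop_mul_const (by positivity) Filter.tendsto_id
  have hd1 : Filter.Tendsto (fun σ => d1 t T x k σ) Filter.atTop Filter.atTop := by
    have h := hq.add_atTop hlin
    have hfun : (fun σ : ℝ => (x - k) / s * σ⁻¹ + σ * (s / 2)) = fun σ => d1 t T x k σ := by
      funext u; unfold d1
      rw [mul_comm u s, ← div_div, div_eq_mul_inv ((x-k)/_), mul_div_assoc]
      ring
    rwa [hfun] at h
  have hd2 : Filter.Tendsto (fun σ => d2 t T x k σ) Filter.atTop Filter.atBot := by
    have hlin2 : Filter.Tendsto (fun σ : ℝ => -(σ * (s / 2))) Filter.atTop Filter.atBot :=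
      Filter.tendsto_neg_atTop_atBot.comp hlin
    have h := hq.add_atBot hlin2
    have hfun : (fun σ : ℝ => (x - k) / s * σ⁻¹ + -(σ * (s / 2))) = fun σ => d2 t T x k σ := by
      funext u; unfold d2
      rw [mul_comm u s, ← div_div, div_eq_mul_inv ((x-k)/_), mul_div_assoc]
      ring
    rwa [hfun] at h
  have hN1 : Filter.Tendsto (fun σ => N (d1 t T x k σ)) Filter.atTop (nhds 1) :=
    tendsto_N_atTop.comp hd1
  have hN2 : Filter.Tendsto (fun σ => N (d2 t T x k σ)) Filter.atTop (nhds 0) :=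
    tendsto_N_atBot.comp hd2
  have h := (hN1.const_mul (Real.exp x)).sub (hN2.const_mul (Real.exp k))
  simpa [BS] using h

lemma BS_root (hτ : 0 < T - t)
    (hl : l ∈ Set.Ioo (max (Real.exp x - Real.exp k) 0) (Real.exp x)) :
    ∃ σ₀ ∈ Set.Ioi (0:ℝ), BS t T x k σ₀ = l := by
  set s := Real.sqrt (T - t) with hs
  have hspos : 0 < s := Real.sqrt_pos.2 hτ
  set M := max (Real.exp x - Real.exp k) 0 with hM
  set c : ℝ := (Real.sqrt (2 * Real.pi))⁻¹ with hc
  have hcpos : 0 < c := by rw [hc]; positivity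
  set a : ℝ := (l - M) / (2 * (Real.exp k * c * s)) with ha
  have hlM : M < l := hl.1
  have hapos : 0 < a := by
    apply div_pos (by linarith)
    positivity
  have hBSa : BS t T x k a < l := by
    have h := BS_le (σ := a) (t := t) (T := T) (x := x) (k := k) hτ hapos
    have heq : Real.exp k * (c * (a * s)) = (l - M) / 2 := by
      rw [ha]; field_simp
    rw [heq] at h
    linarith
  have hev : ∀ᶠ σ in Filter.atTop, l < BS t T x k σ :=
    (tendsto_BS_atTop hτ).eventually (eventually_gt_nhds hl.2)
  obtain ⟨b, hab, hlb⟩ := (Filter.eventually_ge_atTop a).and hev |>.exists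
  have hcont : ContinuousOn (fun σ => BS t T x k σ) (Set.Icc a b) := by
    intro σ hσ
    have hσpos : 0 < σ := lt_of_lt_of_le hapos hσ.1
    exact ((hasStrictDerivAt_BS hτ hσpos).hasDerivAt.continuousAt).continuousWithinAt
  have hIVT := intermediate_value_Icc hab hcont
  have hlmem : l ∈ Set.Icc (BS t T x k a) (BS t T x k b) := ⟨hBSa.le, hlb.le⟩
  obtain ⟨σ₀, hσ₀, hval⟩ := hIVT hlmem
  exact ⟨σ₀, lt_of_lt_of_le hapos hσ₀.1, hval⟩

lemma BSinv_spec (hτ : 0 < T - t)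
    (hl : l ∈ Set.Ioo (max (Real.exp x - Real.exp k) 0) (Real.exp x)) :
    0 < BSinv t T x k l ∧ BS t T x k (BSinv t T x k l) = l ∧
      HasDerivAt (fun q => BSinv t T x k q) (vega t T x k (BSinv t T x k l))⁻¹ l := by
  obtain hroot := BS_root hτ hl
  have hmem : BSinv t T x k l ∈ Set.Ioi (0:ℝ) := Function.invFunOn_mem hroot
  have heq : BS t T x k (BSinv t T x k l) = l := Function.invFunOn_eq hroot
  have hsd := hasStrictDerivAt_BS (t := t) (T := T) (x := x) (k := k) (σ := BSinv t T x k l) hτ hmem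
  have hinj : Set.InjOn (BS t T x k) (Set.Ioi 0) := by
    have := (strictMonoOn_BS (t := t) (T := T) (x := x) (k := k) hτ).injOn
    exact this
  have hg : ∀ᶠ σ in nhds (BSinv t T x k l), BSinv t T x k (BS t T x k σ) = σ := by
    filter_upwards [eventually_gt_nhds hmem] with σ hσ
    exact hinj.leftInvOn_invFunOn hσ
  have h := hsd.to_local_left_inverse (vega_pos hτ).ne' hg
  rw [heq] at h
  exact ⟨hmem, heq, h.hasDerivAt⟩
lemma hasStrictDerivAt_phi (z : ℝ) : HasStrictDerivAt phi (-(z * phi z)) z := by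
  have h := (((hasStrictDerivAt_pow 2 z).neg.div_const 2).exp).const_mul
    (Real.sqrt (2 * Real.pi))⁻¹
  have hfun : (fun z : ℝ => (Real.sqrt (2 * Real.pi))⁻¹ * Real.exp (-z ^ 2 / 2)) = phi := by
    funext u; unfold phi; ring
  change HasStrictDerivAt (fun z : ℝ => (Real.sqrt (2 * Real.pi))⁻¹ * Real.exp (-z ^ 2 / 2))
    ((Real.sqrt (2 * Real.pi))⁻¹ * (Real.exp (-z ^ 2 / 2) * (-(((2:ℕ):ℝ) * z ^ (2 - 1)) / 2))) z at h
  rw [hfun] at h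
  convert h using 1
  unfold phi; ring

lemma hasStrictDerivAt_vega (hτ : 0 < T - t) (hσ : σ ≠ 0) :
    HasStrictDerivAt (fun σ => vega t T x k σ) (vega2 t T x k σ) σ := by
  have h := (((hasStrictDerivAt_phi (d1 t T x k σ)).comp σ
    (hasStrictDerivAt_d1 hτ hσ)).const_mul (Real.exp x)).mul_const (Real.sqrt (T - t))
  have hfun : (fun σ : ℝ => Real.exp x * ((phi ∘ fun σ => d1 t T x k σ) σ) * Real.sqrt (T - t))
      = fun σ => vega t T x k σ := by
    funext u; unfold vega; simp [Function.comp]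
  rw [hfun] at h
  refine h.congr_deriv ?_
  unfold vega2 vega; ring

lemma hasStrictDerivAt_d1p (hτ : 0 < T - t) (hσ : σ ≠ 0) :
    HasStrictDerivAt (fun σ => d1p t T x k σ) (d1pp t T x k σ) σ := by
  have hs : Real.sqrt (T - t) ≠ 0 := (Real.sqrt_pos.2 hτ).ne'
  have hcomp := HasStrictDerivAt.comp (h₂ := fun w : ℝ => w⁻¹) (h := fun u : ℝ => u ^ 2)
    σ (hasStrictDerivAt_inv (pow_ne_zero 2 hσ)) (hasStrictDerivAt_pow 2 σ)
  have h := (hcomp.const_mul ((x - k) / Real.sqrt (T - t))).const_sub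
    (Real.sqrt (T - t) / 2)
  have hfun : (fun σ : ℝ => Real.sqrt (T - t) / 2
      - (x - k) / Real.sqrt (T - t) * (((fun w : ℝ => w⁻¹) ∘ fun u : ℝ => u ^ 2) σ))
      = fun σ => d1p t T x k σ := by
    funext u; unfold d1p; simp only [Function.comp]
    rw [mul_comm (u^2) (Real.sqrt (T - t)), ← div_div, div_eq_mul_inv ((x-k)/_)]
  rw [hfun] at h
  refine h.congr_deriv ?_
  unfold d1pp
  field_simp
  ring

lemma hasStrictDerivAt_vega2 (hτ : 0 < T - t) (hσ : σ ≠ 0) :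
    HasStrictDerivAt (fun σ => vega2 t T x k σ) (vega3 t T x k σ) σ := by
  have h := ((hasStrictDerivAt_vega (x := x) (k := k) hτ hσ).mul
    ((hasStrictDerivAt_d1 (x := x) (k := k) hτ hσ).mul
      (hasStrictDerivAt_d1p (x := x) (k := k) hτ hσ))).neg
  have hfun : (fun σ : ℝ => -(vega t T x k σ * (d1 t T x k σ * d1p t T x k σ)))
      = fun σ => vega2 t T x k σ := by
    funext u; unfold vega2; ring
  change HasStrictDerivAt (fun σ : ℝ => -(vega t T x k σ * (d1 t T x k σ * d1p t T x k σ)))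
    (-(vega2 t T x k σ * (d1 t T x k σ * d1p t T x k σ) + vega t T x k σ * (d1p t T x k σ
      * d1p t T x k σ + d1 t T x k σ * d1pp t T x k σ))) σ at h
  rw [hfun] at h
  convert h using 1
  rfl
theorem bsinv_third_derivative_zero_vanna (t T x k l : ℝ) (htT : t < T)
    (hl : l ∈ Set.Ioo (max (Real.exp x - Real.exp k) 0) (Real.exp x))
    (hzv : d2 t T x k (BSinv t T x k l) = 0) :
    iteratedDeriv 3 (fun p => BSinv t T x k p) l =
      (2 * Real.pi) ^ ((3 : ℝ) / 2) * Real.exp (-3 * x)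
        * Real.exp (3 / 2 * (BSinv t T x k l) ^ 2 * (T - t))
        * (T - t) ^ (-(1 : ℝ) / 2) := by
  have hτ : 0 < T - t := sub_pos.2 htT
  have hs : 0 < Real.sqrt (T - t) := Real.sqrt_pos.2 hτ
  have hsq : Real.sqrt (T - t) ^ 2 = T - t := Real.sq_sqrt hτ.le
  have hVo : IsOpen (Set.Ioo (max (Real.exp x - Real.exp k) 0) (Real.exp x)) := isOpen_Ioo
  have hVl : Set.Ioo (max (Real.exp x - Real.exp k) 0) (Real.exp x) ∈ nhds l :=
    hVo.mem_nhds hl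
  have key : ∀ q ∈ Set.Ioo (max (Real.exp x - Real.exp k) 0) (Real.exp x),
      0 < BSinv t T x k q ∧ BS t T x k (BSinv t T x k q) = q ∧
      HasDerivAt (fun p => BSinv t T x k p) (vega t T x k (BSinv t T x k q))⁻¹ q :=
    fun q hq => BSinv_spec hτ hq
  set G1 : ℝ → ℝ := fun q => (vega t T x k (BSinv t T x k q))⁻¹ with hG1
  set G2 : ℝ → ℝ := fun q =>
    -(vega2 t T x k (BSinv t T x k q) * (vega t T x k (BSinv t T x k q))⁻¹)
      / (vega t T x k (BSinv t T x k q)) ^ 2 with hG2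
  have hvcomp : ∀ q ∈ Set.Ioo (max (Real.exp x - Real.exp k) 0) (Real.exp x),
      HasDerivAt (fun p => vega t T x k (BSinv t T x k p))
        (vega2 t T x k (BSinv t T x k q) * (vega t T x k (BSinv t T x k q))⁻¹) q := by
    intro q hq
    obtain ⟨hpos, heq, hder⟩ := key q hq
    exact ((hasStrictDerivAt_vega (t := t) (T := T) (x := x) (k := k) hτ
      hpos.ne').hasDerivAt).comp q hder
  have hd2G1 : ∀ q ∈ Set.Ioo (max (Real.exp x - Real.exp k) 0) (Real.exp x),
      HasDerivAt G1 (G2 q) q := by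
    intro q hq
    exact (hvcomp q hq).inv (vega_pos hτ).ne'
  -- derivative identities on the interval
  have ev1 : ∀ q ∈ Set.Ioo (max (Real.exp x - Real.exp k) 0) (Real.exp x),
      deriv (fun p => BSinv t T x k p) q = G1 q :=
    fun q hq => ((key q hq).2.2).deriv
  have ev2 : ∀ q ∈ Set.Ioo (max (Real.exp x - Real.exp k) 0) (Real.exp x),
      deriv (deriv (fun p => BSinv t T x k p)) q = G2 q := by
    intro q hq
    have h1 : deriv (fun p => BSinv t T x k p) =ᶠ[nhds q] G1 :=
      Filter.eventually_of_mem (hVo.mem_nhds hq) ev1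
    rw [h1.deriv_eq, (hd2G1 q hq).deriv]
  -- facts at Θ := BSinv t T x k l
  obtain ⟨hΘpos, hΘeq, hΘder⟩ := key l hl
  have hΘs : BSinv t T x k l * Real.sqrt (T - t) ≠ 0 :=
    mul_ne_zero hΘpos.ne' hs.ne'
  unfold d2 at hzv
  have hzv2 := sub_eq_zero.1 hzv
  rw [div_eq_iff hΘs] at hzv2
  have hm : x - k = (BSinv t T x k l) ^ 2 * (T - t) / 2 := by
    rw [hzv2]
    linear_combination (BSinv t T x k l ^ 2 / 2) * hsq
  have hd1Θ : d1 t T x k (BSinv t T x k l) = BSinv t T x k l * Real.sqrt (T - t) := by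
    unfold d1; rw [hm]; field_simp
    linear_combination (-1:ℝ) * hsq
  have hd1pΘ : d1p t T x k (BSinv t T x k l) = 0 := by
    unfold d1p; rw [hm]; field_simp
    linear_combination hsq
  have hv2Θ : vega2 t T x k (BSinv t T x k l) = 0 := by
    unfold vega2; rw [hd1pΘ]; ring
  have hv3Θ : vega3 t T x k (BSinv t T x k l)
      = -(vega t T x k (BSinv t T x k l) * (T - t)) := by
    unfold vega3 d1pp
    rw [hv2Θ, hd1pΘ, hd1Θ, hm]
    field_simp
    linear_combination (0:ℝ) * hsq
  -- third derivative
  have hA : HasDerivAt (fun p => vega2 t T x k (BSinv t T x k p))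
      (vega3 t T x k (BSinv t T x k l) * (vega t T x k (BSinv t T x k l))⁻¹) l :=
    ((hasStrictDerivAt_vega2 (t := t) (T := T) (x := x) (k := k) hτ
      hΘpos.ne').hasDerivAt).comp l (by simpa using hΘder)
  have hB : HasDerivAt G1 (G2 l) l := hd2G1 l hl
  have hnum : HasDerivAt (fun p => -(vega2 t T x k (BSinv t T x k p)
      * (vega t T x k (BSinv t T x k p))⁻¹))
      (-(vega3 t T x k (BSinv t T x k l) * (vega t T x k (BSinv t T x k l))⁻¹
          * (vega t T x k (BSinv t T x k l))⁻¹
        + vega2 t T x k (BSinv t T x k l) * G2 l)) l := (hA.mul hB).neg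
  have hden : HasDerivAt (fun p => (vega t T x k (BSinv t T x k p)) ^ 2)
      ((2 : ℕ) * (vega t T x k (BSinv t T x k l)) ^ 1
        * (vega2 t T x k (BSinv t T x k l) * (vega t T x k (BSinv t T x k l))⁻¹)) l :=
    (hvcomp l hl).pow 2
  have hG2der := hnum.div hden (pow_ne_zero 2 (vega_pos hτ).ne')
  have h3 : iteratedDeriv 3 (fun p => BSinv t T x k p) l
      = deriv (deriv (deriv (fun p => BSinv t T x k p))) l := by
    rw [show (3:ℕ) = 2 + 1 from rfl, iteratedDeriv_succ,
      show (2:ℕ) = 1 + 1 from rfl, iteratedDeriv_succ, iteratedDeriv_one]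
  rw [h3]
  have e2 : deriv (deriv (fun p => BSinv t T x k p)) =ᶠ[nhds l] G2 :=
    Filter.eventually_of_mem hVl ev2
  rw [e2.deriv_eq, (show HasDerivAt G2 _ l from hG2der).deriv]
  -- now pure algebra
  have hG2l : G2 l = 0 := by
    rw [hG2]; simp only; rw [hv2Θ]; simp
  have hval : (-(vega3 t T x k (BSinv t T x k l) * (vega t T x k (BSinv t T x k l))⁻¹
          * (vega t T x k (BSinv t T x k l))⁻¹
        + vega2 t T x k (BSinv t T x k l) * G2 l) * vega t T x k (BSinv t T x k l) ^ 2
      - -(vega2 t T x k (BSinv t T x k l) * (vega t T x k (BSinv t T x k l))⁻¹)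
        * (((2:ℕ):ℝ) * vega t T x k (BSinv t T x k l) ^ 1
          * (vega2 t T x k (BSinv t T x k l) * (vega t T x k (BSinv t T x k l))⁻¹)))
      / (vega t T x k (BSinv t T x k l) ^ 2) ^ 2
      = (T - t) * ((vega t T x k (BSinv t T x k l))⁻¹) ^ 3 := by
    rw [hv2Θ, hv3Θ, hG2l]
    have hvne : vega t T x k (BSinv t T x k l) ≠ 0 := (vega_pos hτ).ne'
    field_simp
    ring
  rw [hval]
  have hvval : vega t T x k (BSinv t T x k l)
      = Real.exp x * ((Real.sqrt (2 * Real.pi))⁻¹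
        * Real.exp (-(BSinv t T x k l * Real.sqrt (T - t)) ^ 2 / 2)) * Real.sqrt (T - t) := by
    unfold vega phi; rw [hd1Θ]
  have hrpow1 : (2 * Real.pi) ^ ((3:ℝ)/2) = Real.sqrt (2 * Real.pi) ^ (3:ℕ) := by
    rw [show ((3:ℝ)/2) = (1/2 : ℝ) * ((3:ℕ) : ℝ) by norm_num,
      Real.rpow_mul (by positivity), Real.rpow_natCast, ← Real.sqrt_eq_rpow]
  have hrpow2 : (T - t) ^ (-(1:ℝ)/2) = (Real.sqrt (T - t))⁻¹ := by
    rw [show (-(1:ℝ)/2) = -(1/2 : ℝ) by norm_num, Real.rpow_neg hτ.le,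
      ← Real.sqrt_eq_rpow]
  have hexp : Real.exp (-3 * x) = (Real.exp x)⁻¹ ^ (3:ℕ) := by
    rw [← Real.exp_neg, ← Real.exp_nat_mul]; norm_num
  have hexp2 : Real.exp (3 / 2 * (BSinv t T x k l) ^ 2 * (T - t))
      = (Real.exp (-(BSinv t T x k l * Real.sqrt (T - t)) ^ 2 / 2))⁻¹ ^ (3:ℕ) := by
    rw [← Real.exp_neg, ← Real.exp_nat_mul]
    congr 1
    rw [mul_pow, hsq]
    ring
  rw [hvval, hrpow1, hrpow2, hexp, hexp2]
  have hπ : Real.sqrt (2 * Real.pi) ≠ 0 := by positivity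
  have hex : Real.exp x ≠ 0 := Real.exp_ne_zero x
  have hee : Real.exp (-(BSinv t T x k l * Real.sqrt (T - t)) ^ 2 / 2) ≠ 0 :=
    Real.exp_ne_zero _
  have hsne : Real.sqrt (T - t) ≠ 0 := hs.ne'
  set s : ℝ := Real.sqrt (T - t) with hsdef
  rw [← hsq]
  field_simp
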